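/- Let G be a finite connected graph that is not 3-colorable, and let H be a graph with countable vertex set that is universal for Forb(G). Then for every natural number n strictly larger than the number of edges of G, the graph H has an n-ary polymorphism that is a quasi near unanimity operation. -/

import Mathlib

/-- `p` is an `n`-ary polymorphism of the graph `H`. -/
def IsPolyN {V : Type*} (H : SimpleGraph V) {n : ℕ} (p : (Fin n → V) → V) : Prop :=
  ∀ a b : Fin n → V, (∀ i, H.Adj (a i) (b i)) → H.Adj (p a) (p b)

/-- `p` is a quasi near unanimity operation: it takes the same value on all tuples
whose coordinates equal a single value `x` with at most one exception. -/
def IsQNU {A : Type*} {n : ℕ} (p : (Fin n → A) → A) : Prop :=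
  ∀ (x y : A) (i : Fin n),
    p (Function.update (fun _ => x) i y) = p (fun _ => x)

/-- `a` is near-unanimous with value `x` : all coordinates equal `x` with at most one
exception. -/
def MyNU {A : Type*} {n : ℕ} (a : Fin n → A) (x : A) : Prop :=
  ∃ i : Fin n, ∀ j : Fin n, j ≠ i → a j = x

lemma myExistsThird {n : ℕ} (hn : 3 ≤ n) (j k : Fin n) :
    ∃ i : Fin n, i ≠ j ∧ i ≠ k := by
  by_contra hcon
  push_neg at hcon
  have hsub : (Finset.univ : Finset (Fin n)) ⊆ {j, k} := by
    intro i _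
    by_cases h : i = j
    · simp [h]
    · simp [hcon i h]
  have h1 := Finset.card_le_card hsub
  have h2 : ({j, k} : Finset (Fin n)).card ≤ 2 := by
    apply le_trans (Finset.card_insert_le _ _)
    simp
  simp [Finset.card_univ] at h1
  omega

lemma myNU_unique {A : Type*} {n : ℕ} (hn : 3 ≤ n) {a : Fin n → A} {x y : A}
    (hx : MyNU a x) (hy : MyNU a y) : x = y := by
  obtain ⟨j, hj⟩ := hx
  obtain ⟨k, hk⟩ := hy
  obtain ⟨i, hij, hik⟩ := myExistsThird hn j k
  rw [← hj i hij, hk i hik]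

open Classical in
/-- Collapse near-unanimous tuples to their value. -/
noncomputable def myIota {A : Type*} {n : ℕ} (a : Fin n → A) : A ⊕ (Fin n → A) :=
  if h : ∃ x, MyNU a x then Sum.inl h.choose else Sum.inr a

lemma myIota_inl {A : Type*} {n : ℕ} (hn : 3 ≤ n) {a : Fin n → A} {x : A}
    (h : MyNU a x) : myIota a = Sum.inl x := by
  have hex : ∃ y, MyNU a y := ⟨x, h⟩
  rw [myIota, dif_pos hex]
  exact congrArg _ (myNU_unique hn hex.choose_spec h)

lemma myIota_eq_inl {A : Type*} {n : ℕ} {a : Fin n → A} {x : A}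
    (h : myIota a = Sum.inl x) : MyNU a x := by
  rw [myIota] at h
  split at h
  · rename_i hex
    injection h with h
    exact h ▸ hex.choose_spec
  · simp at h

lemma myIota_eq_inr {A : Type*} {n : ℕ} {a b : Fin n → A}
    (h : myIota a = Sum.inr b) : a = b := by
  rw [myIota] at h
  split at h
  · simp at h
  · exact Sum.inr_injective h

/-- The auxiliary graph: near-unanimous tuples are collapsed, adjacency is the
existence of componentwise-adjacent preimages under `myIota`. -/
def myQ {A : Type*} (n : ℕ) (H : SimpleGraph A) : SimpleGraph (A ⊕ (Fin n → A)) where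
  Adj w w' := w ≠ w' ∧ ∃ a b : Fin n → A, myIota a = w ∧ myIota b = w' ∧
    ∀ i, H.Adj (a i) (b i)
  symm := by
    refine ⟨?_⟩
    rintro w w' ⟨hne, a, b, ha, hb, hab⟩
    exact ⟨hne.symm, b, a, hb, ha, fun i => (hab i).symm⟩
  loopless := by
    refine ⟨?_⟩
    rintro w ⟨hne, -⟩
    exact hne rfl

/-- A graph that is not 3-colorable has at least 2 edges. -/
lemma myTwoEdges {VG : Type} [Fintype VG] (G : SimpleGraph VG) [DecidableRel G.Adj]
    (hncol : ¬ G.Colorable 3) : 2 ≤ G.edgeFinset.card := by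
  classical
  by_contra hlt
  push_neg at hlt
  have hle1 : G.edgeFinset.card ≤ 1 := by omega
  apply hncol
  by_cases hedge : ∃ u v, G.Adj u v
  · obtain ⟨u₀, v₀, huv⟩ := hedge
    have hmem : s(u₀, v₀) ∈ G.edgeFinset := by
      rw [SimpleGraph.mem_edgeFinset]
      exact huv
    refine ⟨SimpleGraph.Coloring.mk
      (fun w => if w = u₀ then (0 : Fin 3) else 1) ?_⟩
    intro a b hab
    have hmem' : s(a, b) ∈ G.edgeFinset := by
      rw [SimpleGraph.mem_edgeFinset]
      exact hab
    have heq : s(a, b) = s(u₀, v₀) := Finset.card_le_one.mp hle1 _ hmem' _ hmem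
    rw [Sym2.eq_iff] at heq
    have hne : u₀ ≠ v₀ := huv.ne
    rcases heq with ⟨ha, hb⟩ | ⟨ha, hb⟩
    · subst ha; subst hb
      show (if a = a then (0 : Fin 3) else 1) ≠ (if b = a then 0 else 1)
      rw [if_pos rfl, if_neg hne.symm]
      decide
    · subst ha; subst hb
      show (if a = b then (0 : Fin 3) else 1) ≠ (if b = b then 0 else 1)
      rw [if_neg hne.symm, if_pos rfl]
      decide
  · push_neg at hedge
    exact ⟨SimpleGraph.Coloring.mk (fun _ => (0 : Fin 3))
      (fun {a b} hab => absurd hab (hedge a b))⟩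

theorem stmt6 {VG VH : Type} [Fintype VG] [Countable VH]
    (G : SimpleGraph VG) [DecidableRel G.Adj]
    (hconn : G.Connected) (hncol : ¬ G.Colorable 3)
    (H : SimpleGraph VH)
    (huniv : ∀ (W : Type) (C : SimpleGraph W), Countable W →
      (Nonempty (C ↪g H) ↔ ¬ Nonempty (G →g C)))
    (n : ℕ) (hn : G.edgeFinset.card < n) :
    ∃ p : (Fin n → VH) → VH, IsPolyN H p ∧ IsQNU p := by
  classical
  have hE2 : 2 ≤ G.edgeFinset.card := myTwoEdges G hncol
  have hn3 : 3 ≤ n := by omega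
  -- there is no homomorphism G → H
  have hGH : ¬ Nonempty (G →g H) :=
    (huniv VH H inferInstance).mp ⟨SimpleGraph.Embedding.refl⟩
  -- there is no homomorphism G → Q
  have hGQ : ¬ Nonempty (G →g myQ n H) := by
    rintro ⟨h⟩
    -- coordinate projections of h
    set g : Fin n → VG → VH :=
      fun i u => Sum.elim (fun x => x) (fun c => c i) (h u) with hg
    -- for each edge, all but at most one coordinate projection respects adjacency
    have key : ∀ u v : VG, G.Adj u v →
        ∃ j : Fin n, ∀ i : Fin n, i ≠ j → H.Adj (g i u) (g i v) := by
      intro u v hadj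
      obtain ⟨hne, a, b, ha, hb, hab⟩ := h.map_adj hadj
      cases hu : h u with
      | inl x =>
        have hNUa : MyNU a x := myIota_eq_inl (hu ▸ ha)
        obtain ⟨ja, hja⟩ := hNUa
        cases hv : h v with
        | inl y =>
          have hNUb : MyNU b y := myIota_eq_inl (hv ▸ hb)
          obtain ⟨jb, hjb⟩ := hNUb
          obtain ⟨i, hi1, hi2⟩ := myExistsThird hn3 ja jb
          have hxy : H.Adj x y := by
            have := hab i
            rwa [hja i hi1, hjb i hi2] at this
          exact ⟨⟨0, by omega⟩, fun i _ => by simp [hg, hu, hv, hxy]⟩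
        | inr c =>
          have hbc : b = c := myIota_eq_inr (hv ▸ hb)
          refine ⟨ja, fun i hi => ?_⟩
          have := hab i
          rw [hja i hi, hbc] at this
          simpa [hg, hu, hv] using this
      | inr c =>
        have hac : a = c := myIota_eq_inr (hu ▸ ha)
        cases hv : h v with
        | inl y =>
          have hNUb : MyNU b y := myIota_eq_inl (hv ▸ hb)
          obtain ⟨jb, hjb⟩ := hNUb
          refine ⟨jb, fun i hi => ?_⟩
          have := hab i
          rw [hjb i hi, hac] at this
          simpa [hg, hu, hv] using this
        | inr d =>
          have hbd : b = d := myIota_eq_inr (hv ▸ hb)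
          refine ⟨⟨0, by omega⟩, fun i _ => ?_⟩
          have := hab i
          rw [hac, hbd] at this
          simpa [hg, hu, hv] using this
    -- a "bad coordinate" for each potential edge
    set P : Sym2 VG → Fin n → Prop :=
      fun e j => ∀ u v : VG, s(u, v) = e → ∀ i : Fin n, i ≠ j →
        H.Adj (g i u) (g i v) with hP
    have keyP : ∀ u v : VG, G.Adj u v → ∃ j, P s(u, v) j := by
      intro u v hadj
      obtain ⟨j, hj⟩ := key u v hadj
      refine ⟨j, fun u' v' he i hi => ?_⟩
      rw [Sym2.eq_iff] at he
      rcases he with ⟨h1, h2⟩ | ⟨h1, h2⟩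
      · subst h1; subst h2; exact hj i hi
      · subst h1; subst h2; exact (hj i hi).symm
    set bad : Sym2 VG → Fin n :=
      fun e => if hex : ∃ j, P e j then hex.choose else ⟨0, by omega⟩ with hbad
    -- pigeonhole: some coordinate is not bad for any edge
    have himg : (G.edgeFinset.image bad).card < n := by
      exact lt_of_le_of_lt (Finset.card_image_le) hn
    have hexi : ∃ i : Fin n, i ∉ G.edgeFinset.image bad := by
      by_contra hc
      push_neg at hc
      have : (Finset.univ : Finset (Fin n)) ⊆ G.edgeFinset.image bad :=
        fun i _ => hc i
      have := Finset.card_le_card this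
      simp [Finset.card_univ] at this
      omega
    obtain ⟨i, hi⟩ := hexi
    -- the i-th projection is a homomorphism G → H
    refine hGH ⟨⟨g i, ?_⟩⟩
    intro u v hadj
    have hex : ∃ j, P s(u, v) j := keyP u v hadj
    have hPbad : P s(u, v) (bad s(u, v)) := by
      rw [hbad]
      simpa [hex] using hex.choose_spec
    have hmem : s(u, v) ∈ G.edgeFinset := by
      rw [SimpleGraph.mem_edgeFinset]; exact hadj
    have hne : bad s(u, v) ≠ i := by
      intro hcontra
      exact hi (Finset.mem_image.mpr ⟨s(u, v), hmem, hcontra⟩)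
    exact hPbad u v rfl i (Ne.symm hne)
  -- by universality, Q embeds into H
  obtain ⟨e⟩ : Nonempty (myQ n H ↪g H) :=
    (huniv (VH ⊕ (Fin n → VH)) (myQ n H) inferInstance).mpr hGQ
  refine ⟨fun a => e (myIota a), ?_, ?_⟩
  · -- polymorphism
    intro a b hab
    apply e.map_rel_iff.mpr
    refine ⟨?_, a, b, rfl, rfl, hab⟩
    -- iota a ≠ iota b
    intro hcontra
    cases hia : myIota a with
    | inl x =>
      have hNUa : MyNU a x := myIota_eq_inl hia
      have hNUb : MyNU b x := myIota_eq_inl (hcontra ▸ hia)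
      obtain ⟨ja, hja⟩ := hNUa
      obtain ⟨jb, hjb⟩ := hNUb
      obtain ⟨i, hi1, hi2⟩ := myExistsThird hn3 ja jb
      have := hab i
      rw [hja i hi1, hjb i hi2] at this
      exact H.loopless.irrefl x this
    | inr c =>
      have hac : a = c := myIota_eq_inr hia
      have hbc : b = c := myIota_eq_inr (hcontra ▸ hia)
      have := hab ⟨0, by omega⟩
      rw [hac, hbc] at this
      exact H.loopless.irrefl _ this
  · -- quasi near unanimity
    intro x y i
    have h1 : MyNU (Function.update (fun _ => x) i y) x :=
      ⟨i, fun j hj => Function.update_of_ne hj _ _⟩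
    have h2 : MyNU (fun _ : Fin n => x) x := ⟨⟨0, by omega⟩, fun _ _ => rfl⟩
    show e (myIota (Function.update (fun _ => x) i y)) = e (myIota fun _ => x)
    rw [myIota_inl hn3 h1, myIota_inl hn3 h2]
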